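/- Nonnegativity is preserved for the full SEIR system: if a solution (s, e, i, r) of the uncontrolled SEIR system on [0,T] has nonnegative initial conditions s(0), e(0), i(0), r(0) ≥ 0, then s(t), e(t), i(t), r(t) ≥ 0 for all t ∈ [0,T]. -/

import Mathlib

set_option maxHeartbeats 1000000


open Set Filter Topology

theorem seir_nonnegativity (β γ μ T : ℝ) (hβ : 0 < β) (hγ : 0 < γ) (hμ : 0 < μ)
    (s e i r : ℝ → ℝ)
    (hscont : ContinuousOn s (Icc 0 T)) (hecont : ContinuousOn e (Icc 0 T))
    (hicont : ContinuousOn i (Icc 0 T)) (hrcont : ContinuousOn r (Icc 0 T))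
    (hs : ∀ t ∈ Icc 0 T, HasDerivAt s (-β * s t * i t) t)
    (he : ∀ t ∈ Icc 0 T, HasDerivAt e (β * s t * i t - γ * e t) t)
    (hi : ∀ t ∈ Icc 0 T, HasDerivAt i (γ * e t - μ * i t) t)
    (hr : ∀ t ∈ Icc 0 T, HasDerivAt r (μ * i t) t)
    (hs0 : 0 ≤ s 0) (he0 : 0 ≤ e 0) (hi0 : 0 ≤ i 0) (hr0 : 0 ≤ r 0) :
    ∀ t ∈ Icc 0 T, 0 ≤ s t ∧ 0 ≤ e t ∧ 0 ≤ i t ∧ 0 ≤ r t := by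
  intro t ht
  have hT : (0:ℝ) ≤ T := ht.1.trans ht.2
  have h0Icc : (0:ℝ) ∈ Icc (0:ℝ) T := ⟨le_refl _, hT⟩
  obtain ⟨Cs, hCs⟩ := (isCompact_Icc : IsCompact (Icc (0:ℝ) T)).exists_bound_of_continuousOn hscont
  obtain ⟨Ci, hCi⟩ := (isCompact_Icc : IsCompact (Icc (0:ℝ) T)).exists_bound_of_continuousOn hicont
  set M : ℝ := max Cs Ci with hMdef
  have hMs : ∀ u ∈ Icc (0:ℝ) T, |s u| ≤ M :=
    fun u hu => le_trans (by simpa using hCs u hu) (le_max_left _ _)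
  have hMi : ∀ u ∈ Icc (0:ℝ) T, |i u| ≤ M :=
    fun u hu => le_trans (by simpa using hCi u hu) (le_max_right _ _)
  have hM0 : 0 ≤ M := le_trans (abs_nonneg (s 0)) (hMs 0 h0Icc)
  set K : ℝ := β * M + γ + 1 with hKdef
  -- Key invariance claim with ε-perturbation
  have key : ∀ ε : ℝ, 0 < ε → ∀ u ∈ Icc (0:ℝ) T,
      0 ≤ s u + ε * Real.exp (K * u) ∧ 0 ≤ e u + ε * Real.exp (K * u) ∧
        0 ≤ i u + ε * Real.exp (K * u) := by
    intro ε hε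
    by_contra hcon
    push_neg at hcon
    obtain ⟨u0, hu0, hbad⟩ := hcon
    have hbad' : s u0 + ε * Real.exp (K * u0) < 0 ∨ e u0 + ε * Real.exp (K * u0) < 0 ∨
        i u0 + ε * Real.exp (K * u0) < 0 := by
      by_contra h
      push_neg at h
      exact absurd (hbad h.1 h.2.1) (not_lt.2 h.2.2)
    set A : Set ℝ := {u | u ∈ Icc (0:ℝ) T ∧ (s u + ε * Real.exp (K * u) < 0 ∨
        e u + ε * Real.exp (K * u) < 0 ∨ i u + ε * Real.exp (K * u) < 0)} with hAdef
    have hAne : A.Nonempty := ⟨u0, hu0, hbad'⟩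
    have hAbdd : BddBelow A := ⟨0, fun a ha => ha.1.1⟩
    set t1 := sInf A with ht1def
    have ht1mem : t1 ∈ Icc (0:ℝ) T :=
      ⟨le_csInf hAne fun a ha => ha.1.1, (csInf_le hAbdd ⟨hu0, hbad'⟩).trans hu0.2⟩
    have hexp : Continuous fun u : ℝ => ε * Real.exp (K * u) := by continuity
    have hcont : ∀ u ∈ Icc (0:ℝ) T, ContinuousAt s u ∧ ContinuousAt e u ∧ ContinuousAt i u :=
      fun u hu => ⟨(hs u hu).continuousAt, (he u hu).continuousAt, (hi u hu).continuousAt⟩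
    set F : ℝ → ℝ := fun u => min (s u + ε * Real.exp (K * u))
        (min (e u + ε * Real.exp (K * u)) (i u + ε * Real.exp (K * u))) with hFdef
    have hFcont : ∀ u ∈ Icc (0:ℝ) T, ContinuousAt F u := by
      intro u hu
      obtain ⟨h1, h2, h3⟩ := hcont u hu
      exact (h1.add hexp.continuousAt).min ((h2.add hexp.continuousAt).min
        (h3.add hexp.continuousAt))
    have hF0 : 0 < F 0 := by
      have hexp0 : Real.exp (K * 0) = 1 := by simp
      simp only [hFdef, hexp0, mul_one]
      exact lt_min (by linarith) (lt_min (by linarith) (by linarith))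
    have hFnegA : ∀ a ∈ A, F a < 0 := by
      intro a ha
      rcases ha.2 with h | h | h
      · exact lt_of_le_of_lt (min_le_left _ _) h
      · exact lt_of_le_of_lt ((min_le_right _ _).trans (min_le_left _ _)) h
      · exact lt_of_le_of_lt ((min_le_right _ _).trans (min_le_right _ _)) h
    have ht1pos : 0 < t1 := by
      obtain ⟨δ, hδpos, hδ⟩ := Metric.mem_nhds_iff.1
        ((hFcont 0 h0Icc).preimage_mem_nhds (Ioi_mem_nhds hF0))
      refine lt_of_lt_of_le hδpos (le_csInf hAne ?_)
      intro a ha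
      by_contra hlt
      push_neg at hlt
      have haball : a ∈ Metric.ball (0:ℝ) δ := by
        rw [Metric.mem_ball, Real.dist_eq, sub_zero, abs_of_nonneg ha.1.1]
        exact hlt
      exact absurd (hδ haball) (not_lt.2 (hFnegA a ha).le)
    have ht1cl : t1 ∈ closure A := csInf_mem_closure hAne hAbdd
    haveI hneA : (𝓝[A] t1).NeBot := by
      rwa [mem_closure_iff_nhdsWithin_neBot] at ht1cl
    have hFt1 : F t1 ≤ 0 := by
      have htd : Filter.Tendsto F (𝓝[A] t1) (𝓝 (F t1)) := (hFcont t1 ht1mem).continuousWithinAt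
      refine le_of_tendsto htd ?_
      filter_upwards [self_mem_nhdsWithin] with a ha
      exact (hFnegA a ha).le
    have hpre : ∀ u, 0 ≤ u → u < t1 → 0 ≤ s u + ε * Real.exp (K * u) ∧
        0 ≤ e u + ε * Real.exp (K * u) ∧ 0 ≤ i u + ε * Real.exp (K * u) := by
      intro u h0u hut1
      by_contra h
      have huIcc : u ∈ Icc (0:ℝ) T := ⟨h0u, hut1.le.trans ht1mem.2⟩
      have hdisj : s u + ε * Real.exp (K * u) < 0 ∨ e u + ε * Real.exp (K * u) < 0 ∨
          i u + ε * Real.exp (K * u) < 0 := by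
        by_contra h2
        push_neg at h2
        exact h ⟨h2.1, h2.2.1, h2.2.2⟩
      exact absurd (csInf_le hAbdd ⟨huIcc, hdisj⟩) (not_le.2 hut1)
    have hIco_mem : Ico (0:ℝ) t1 ∈ 𝓝[<] t1 := by
      rw [← Ici_inter_Iio]
      exact inter_mem (nhdsWithin_le_nhds (Ici_mem_nhds ht1pos)) self_mem_nhdsWithin
    have hlt1 : ∀ f : ℝ → ℝ, ContinuousAt f t1 → (∀ u, 0 ≤ u → u < t1 → 0 ≤ f u) → 0 ≤ f t1 := by
      intro f hf hfu
      refine ge_of_tendsto (hf.continuousWithinAt :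
        Filter.Tendsto f (𝓝[<] t1) (𝓝 (f t1))) ?_
      filter_upwards [hIco_mem] with u hu
      exact hfu u hu.1 hu.2
    have h1 : 0 ≤ s t1 + ε * Real.exp (K * t1) :=
      hlt1 _ ((hcont t1 ht1mem).1.add hexp.continuousAt) (fun u a b => (hpre u a b).1)
    have h2 : 0 ≤ e t1 + ε * Real.exp (K * t1) :=
      hlt1 _ ((hcont t1 ht1mem).2.1.add hexp.continuousAt) (fun u a b => (hpre u a b).2.1)
    have h3 : 0 ≤ i t1 + ε * Real.exp (K * t1) :=
      hlt1 _ ((hcont t1 ht1mem).2.2.add hexp.continuousAt) (fun u a b => (hpre u a b).2.2)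
    have hcase : s t1 + ε * Real.exp (K * t1) = 0 ∨ e t1 + ε * Real.exp (K * t1) = 0 ∨
        i t1 + ε * Real.exp (K * t1) = 0 := by
      rcases min_le_iff.1 hFt1 with h | h
      · exact Or.inl (le_antisymm h h1)
      · rcases min_le_iff.1 h with h' | h'
        · exact Or.inr (Or.inl (le_antisymm h' h2))
        · exact Or.inr (Or.inr (le_antisymm h' h3))
    -- slope lemma: a function nonneg before t1 vanishing at t1 has nonpositive derivative
    have slope_le : ∀ (f : ℝ → ℝ) (d : ℝ), HasDerivAt f d t1 → f t1 = 0 →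
        (∀ u, 0 ≤ u → u < t1 → 0 ≤ f u) → d ≤ 0 := by
      intro f d hf hf0 hfn
      have h2' : Tendsto (slope f t1) (𝓝[<] t1) (𝓝 d) :=
        (hasDerivAt_iff_tendsto_slope.1 hf).mono_left
          (nhdsWithin_mono _ fun u hu => ne_of_lt hu)
      refine le_of_tendsto h2' ?_
      filter_upwards [hIco_mem] with u hu
      have hnum : 0 ≤ f u := hfn u hu.1 hu.2
      rw [slope_def_field, hf0, sub_zero]
      exact div_nonpos_iff.2 (Or.inl ⟨hnum, by linarith [hu.2]⟩)
    -- derivative of the perturbation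
    have hφ : HasDerivAt (fun u => ε * Real.exp (K * u)) (ε * K * Real.exp (K * t1)) t1 := by
      have hlin : HasDerivAt (fun u : ℝ => K * u) K t1 := by
        simpa using (hasDerivAt_id t1).const_mul K
      have := hlin.exp.const_mul ε
      rw [show ε * K * Real.exp (K * t1) = ε * (Real.exp (K * t1) * K) by ring]
      exact this
    have hE : 0 < Real.exp (K * t1) := Real.exp_pos _
    have hE1 : 0 < ε * Real.exp (K * t1) := mul_pos hε hE
    have hKE : ε * K * Real.exp (K * t1) = β * M * (ε * Real.exp (K * t1)) +
        γ * (ε * Real.exp (K * t1)) + ε * Real.exp (K * t1) := by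
      rw [hKdef]; ring
    have hiM' : -M ≤ i t1 ∧ i t1 ≤ M := abs_le.1 (hMi t1 ht1mem)
    have hsM' : -M ≤ s t1 ∧ s t1 ≤ M := abs_le.1 (hMs t1 ht1mem)
    have hγE : 0 < γ * (ε * Real.exp (K * t1)) := mul_pos hγ hE1
    rcases hcase with hc | hc | hc
    · -- s-component hits zero
      have hd : HasDerivAt (fun u => s u + ε * Real.exp (K * u))
          (-β * s t1 * i t1 + ε * K * Real.exp (K * t1)) t1 := (hs t1 ht1mem).add hφ
      have hle := slope_le _ _ hd hc (fun u a b => (hpre u a b).1)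
      have hst1 : s t1 = -(ε * Real.exp (K * t1)) := by linarith
      have hprod : -(β * M * (ε * Real.exp (K * t1))) ≤ -β * s t1 * i t1 := by
        have heq : -β * s t1 * i t1 = (β * (ε * Real.exp (K * t1))) * i t1 := by
          rw [hst1]; ring
        rw [heq]
        calc -(β * M * (ε * Real.exp (K * t1)))
            = (β * (ε * Real.exp (K * t1))) * (-M) := by ring
          _ ≤ (β * (ε * Real.exp (K * t1))) * i t1 :=
            mul_le_mul_of_nonneg_left hiM'.1 (by positivity)
      linarith
    · -- e-component hits zero
      have hd : HasDerivAt (fun u => e u + ε * Real.exp (K * u))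
          (β * s t1 * i t1 - γ * e t1 + ε * K * Real.exp (K * t1)) t1 := (he t1 ht1mem).add hφ
      have hle := slope_le _ _ hd hc (fun u a b => (hpre u a b).2.1)
      have het1 : e t1 = -(ε * Real.exp (K * t1)) := by linarith
      have hslb : -(ε * Real.exp (K * t1)) ≤ s t1 := by linarith
      have hilb : -(ε * Real.exp (K * t1)) ≤ i t1 := by linarith
      have hprod : -(M * (ε * Real.exp (K * t1))) ≤ s t1 * i t1 := by
        rcases le_or_gt 0 (i t1) with hi0' | hi0'
        · calc -(M * (ε * Real.exp (K * t1)))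
              = -(ε * Real.exp (K * t1)) * M := by ring
            _ ≤ -(ε * Real.exp (K * t1)) * i t1 := by
                apply mul_le_mul_of_nonpos_left hiM'.2 (by linarith)
            _ ≤ s t1 * i t1 := mul_le_mul_of_nonneg_right hslb hi0'
        · calc -(M * (ε * Real.exp (K * t1)))
              = M * -(ε * Real.exp (K * t1)) := by ring
            _ ≤ M * i t1 := mul_le_mul_of_nonneg_left hilb hM0
            _ ≤ s t1 * i t1 := mul_le_mul_of_nonpos_right hsM'.2 hi0'.le
      have hβprod : -(β * M * (ε * Real.exp (K * t1))) ≤ β * s t1 * i t1 := by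
        have := mul_le_mul_of_nonneg_left hprod hβ.le
        calc -(β * M * (ε * Real.exp (K * t1)))
            = β * -(M * (ε * Real.exp (K * t1))) := by ring
          _ ≤ β * (s t1 * i t1) := this
          _ = β * s t1 * i t1 := by ring
      have hγe : γ * e t1 = -(γ * (ε * Real.exp (K * t1))) := by rw [het1]; ring
      linarith
    · -- i-component hits zero
      have hd : HasDerivAt (fun u => i u + ε * Real.exp (K * u))
          (γ * e t1 - μ * i t1 + ε * K * Real.exp (K * t1)) t1 := (hi t1 ht1mem).add hφ
      have hle := slope_le _ _ hd hc (fun u a b => (hpre u a b).2.2)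
      have hit1 : i t1 = -(ε * Real.exp (K * t1)) := by linarith
      have helb : -(ε * Real.exp (K * t1)) ≤ e t1 := by linarith
      have hγe : -(γ * (ε * Real.exp (K * t1))) ≤ γ * e t1 := by
        calc -(γ * (ε * Real.exp (K * t1))) = γ * -(ε * Real.exp (K * t1)) := by ring
          _ ≤ γ * e t1 := mul_le_mul_of_nonneg_left helb hγ.le
      have hμi : μ * i t1 = -(μ * (ε * Real.exp (K * t1))) := by rw [hit1]; ring
      have hμE : 0 < μ * (ε * Real.exp (K * t1)) := mul_pos hμ hE1
      have hβME : 0 ≤ β * M * (ε * Real.exp (K * t1)) := by positivity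
      linarith
  -- pass to the limit ε → 0
  have lim0 : ∀ x C : ℝ, 0 < C → (∀ ε : ℝ, 0 < ε → 0 ≤ x + ε * C) → 0 ≤ x := by
    intro x C hC h
    by_contra hx
    push_neg at hx
    have h1 := h (-x / (2 * C)) (div_pos (by linarith) (by linarith))
    have h2 : x + -x / (2 * C) * C = x / 2 := by
      field_simp
      ring
    linarith
  have nonneg3 : ∀ u ∈ Icc (0:ℝ) T, 0 ≤ s u ∧ 0 ≤ e u ∧ 0 ≤ i u := by
    intro u hu
    exact ⟨lim0 _ _ (Real.exp_pos (K * u)) fun ε hε => (key ε hε u hu).1,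
      lim0 _ _ (Real.exp_pos (K * u)) fun ε hε => (key ε hε u hu).2.1,
      lim0 _ _ (Real.exp_pos (K * u)) fun ε hε => (key ε hε u hu).2.2⟩
  have hrmono : MonotoneOn r (Icc (0:ℝ) T) := by
    apply monotoneOn_of_deriv_nonneg (convex_Icc 0 T) hrcont
    · intro x hx
      rw [interior_Icc] at hx
      exact (hr x ⟨hx.1.le, hx.2.le⟩).differentiableAt.differentiableWithinAt
    · intro x hx
      rw [interior_Icc] at hx
      rw [(hr x ⟨hx.1.le, hx.2.le⟩).deriv]
      exact mul_nonneg hμ.le (nonneg3 x ⟨hx.1.le, hx.2.le⟩).2.2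
  obtain ⟨hh1, hh2, hh3⟩ := nonneg3 t ht
  exact ⟨hh1, hh2, hh3, hr0.trans (hrmono h0Icc ht ht.1)⟩
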